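/- arXiv:2412.18400 — 3 statements merged into one kernel-verified Lean document; each statement's English description precedes it below -/
import Mathlib

section
/- Let π ≠ φ be vertices of G_n, n ≥ 2, and let ψ ∈ S_n. Then dsc(π,ψ) ∩ dsc(ψ,φ) = ∅ if and only if ψ lies on some shortest path between π and φ in G_n, i.e., if and only if d_{G_n}(π,ψ) + d_{G_n}(ψ,φ) = d_{G_n}(π,φ). -/
open Finset

/-- The set of index pairs `(i,j)` with `i < j`. -/
def pairs (n : ℕ) : Finset (Fin n × Fin n) :=
  Finset.univ.filter (fun p => p.1 < p.2)

/-- The discordance set of two permutations: all pairs `i < j` with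
`(π_j - π_i)(φ_j - φ_i) < 0`. -/
def dsc (n : ℕ) (π φ : Equiv.Perm (Fin n)) : Finset (Fin n × Fin n) :=
  (pairs n).filter (fun p =>
    ((π p.2 : ℤ) - (π p.1 : ℤ)) * ((φ p.2 : ℤ) - (φ p.1 : ℤ)) < 0)

/-- `W` is a weight: a strictly upper triangular matrix of nonnegative reals
with positive total sum. -/
def IsWeight (n : ℕ) (W : Fin n → Fin n → ℝ) : Prop :=
  (∀ i j : Fin n, ¬ i < j → W i j = 0) ∧ (∀ i j : Fin n, 0 ≤ W i j) ∧
    0 < ∑ p ∈ pairs n, W p.1 p.2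

/-- The weighted Kendall tau distance. -/
noncomputable def dW (n : ℕ) (W : Fin n → Fin n → ℝ) (π φ : Equiv.Perm (Fin n)) : ℝ :=
  (∑ p ∈ dsc n π φ, W p.1 p.2) / (∑ p ∈ pairs n, W p.1 p.2)
lemma dsc_comm (n : ℕ) (π φ : Equiv.Perm (Fin n)) : dsc n π φ = dsc n φ π := by
  ext p
  simp only [dsc, Finset.mem_filter]
  rw [mul_comm]

/-- The edge graph of the permutohedron of order `n`: two permutations are
adjacent iff their discordance set is a singleton. -/
def Gn (n : ℕ) : SimpleGraph (Equiv.Perm (Fin n)) where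
  Adj π φ := (dsc n π φ).card = 1
  symm := by
    constructor
    intro π φ h
    rwa [dsc_comm]
  loopless := by
    constructor
    intro π h
    have he : dsc n π π = ∅ := by
      ext p
      simp only [dsc, Finset.mem_filter, Finset.notMem_empty, iff_false, not_and]
      intro _
      exact not_lt.mpr (mul_self_nonneg _)
    rw [he] at h
    simp at h


section Aux

variable {n : ℕ}

private lemma sign_lemma (a b c : ℤ) (ha : a ≠ 0) (hb : b ≠ 0) (hc : c ≠ 0) :
    a * c < 0 ↔ ¬ ((a * b < 0) ↔ (b * c < 0)) := by
  rw [mul_neg_iff, mul_neg_iff, mul_neg_iff]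
  omega

lemma mem_dsc {π φ : Equiv.Perm (Fin n)} {p : Fin n × Fin n} :
    p ∈ dsc n π φ ↔ p.1 < p.2 ∧
      ((π p.2 : ℤ) - (π p.1 : ℤ)) * ((φ p.2 : ℤ) - (φ p.1 : ℤ)) < 0 := by
  simp [dsc, pairs, Finset.mem_filter, and_assoc]

lemma perm_sub_ne (π : Equiv.Perm (Fin n)) {i j : Fin n} (h : i ≠ j) :
    ((π j : ℤ) - (π i : ℤ)) ≠ 0 := by
  intro hc
  have hv : (π j : ℕ) = (π i : ℕ) := by omega
  exact h (π.injective (Fin.ext hv)).symm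

lemma dsc_self (π : Equiv.Perm (Fin n)) : dsc n π π = ∅ := by
  ext p
  simp only [mem_dsc, Finset.notMem_empty, iff_false, not_and]
  intro _
  exact not_lt.mpr (mul_self_nonneg _)

lemma dsc_mem_iff (π ψ φ : Equiv.Perm (Fin n)) {p : Fin n × Fin n} (hp : p.1 < p.2) :
    p ∈ dsc n π φ ↔ ¬ (p ∈ dsc n π ψ ↔ p ∈ dsc n ψ φ) := by
  rw [mem_dsc, mem_dsc, mem_dsc]
  have ha := perm_sub_ne π hp.ne
  have hb := perm_sub_ne ψ hp.ne
  have hc := perm_sub_ne φ hp.ne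
  simp only [hp, true_and]
  exact sign_lemma _ _ _ ha hb hc

lemma dsc_card_add (π ψ φ : Equiv.Perm (Fin n)) :
    (dsc n π φ).card + 2 * ((dsc n π ψ) ∩ (dsc n ψ φ)).card
      = (dsc n π ψ).card + (dsc n ψ φ).card := by
  classical
  have h1 : dsc n π φ = ((dsc n π ψ) ∪ (dsc n ψ φ)) \ ((dsc n π ψ) ∩ (dsc n ψ φ)) := by
    ext p
    by_cases hp : p.1 < p.2
    · rw [Finset.mem_sdiff, Finset.mem_union, Finset.mem_inter, dsc_mem_iff π ψ φ hp]
      tauto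
    · have h2 : ∀ π' φ' : Equiv.Perm (Fin n), p ∉ dsc n π' φ' := by
        intro π' φ' hmem
        exact hp (mem_dsc.mp hmem).1
      simp [h2]
  have h3 := Finset.card_union_add_card_inter (dsc n π ψ) (dsc n ψ φ)
  have h4 : ((dsc n π ψ) ∩ (dsc n ψ φ)) ⊆ ((dsc n π ψ) ∪ (dsc n ψ φ)) :=
    Finset.inter_subset_union
  have h5 := Finset.card_le_card h4
  rw [h1, Finset.card_sdiff_of_subset h4]
  omega

lemma perm_strictMono_fix (ρ : Equiv.Perm (Fin n)) (h : StrictMono ρ) (x : Fin n) : ρ x = x := by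
  have h1 := Subsingleton.elim (StrictMono.orderIsoOfSurjective ρ h ρ.surjective)
    (OrderIso.refl (Fin n))
  have h2 := congrFun (StrictMono.coe_orderIsoOfSurjective ρ h ρ.surjective) x
  rw [h1] at h2
  simpa using h2.symm

lemma eq_of_dsc_empty {π φ : Equiv.Perm (Fin n)} (h : dsc n π φ = ∅) : π = φ := by
  have key0 : ∀ i j : Fin n, i < j →
      0 < ((π j : ℤ) - (π i : ℤ)) * ((φ j : ℤ) - (φ i : ℤ)) := by
    intro i j hij
    have hnm : (i, j) ∉ dsc n π φ := by
      rw [h]; exact Finset.notMem_empty _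
    rw [mem_dsc] at hnm
    push_neg at hnm
    have h2 := hnm hij
    have h3 := mul_ne_zero (perm_sub_ne π hij.ne) (perm_sub_ne φ hij.ne)
    exact lt_of_le_of_ne h2 (Ne.symm h3)
  have key : ∀ i j : Fin n, i ≠ j →
      0 < ((π j : ℤ) - (π i : ℤ)) * ((φ j : ℤ) - (φ i : ℤ)) := by
    intro i j hij
    rcases lt_or_gt_of_ne hij with h1 | h1
    · exact key0 i j h1
    · have h2 := key0 j i h1
      nlinarith [h2]
  have mono : StrictMono (φ * π⁻¹ : Equiv.Perm (Fin n)) := by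
    intro a b hab
    have hne : π.symm a ≠ π.symm b := fun hc => hab.ne (π.symm.injective hc)
    have hk := key (π.symm a) (π.symm b) hne
    rw [Equiv.apply_symm_apply, Equiv.apply_symm_apply] at hk
    have h1 : (a : ℤ) < (b : ℤ) := by exact_mod_cast hab
    have h2 : ((φ (π.symm a) : ℕ) : ℤ) < ((φ (π.symm b) : ℕ) : ℤ) := by nlinarith
    show (φ (π⁻¹ a)) < (φ (π⁻¹ b))
    rw [Equiv.Perm.inv_def, Fin.lt_def]
    omega
  have hone : ∀ x, (φ * π⁻¹ : Equiv.Perm (Fin n)) x = x := perm_strictMono_fix _ mono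
  apply Equiv.ext
  intro x
  have h5 := hone (π x)
  rw [Equiv.Perm.mul_apply, Equiv.Perm.inv_def, Equiv.symm_apply_apply] at h5
  exact h5.symm

lemma exists_descent (g : ℕ → ℤ) (a b : ℕ) (hab : a < b) (h : g b < g a) :
    ∃ k, a ≤ k ∧ k + 1 ≤ b ∧ g (k + 1) < g k := by
  by_contra hc
  push_neg at hc
  have key : ∀ m, a + m ≤ b → g a ≤ g (a + m) := by
    intro m
    induction m with
    | zero => intro _; simp
    | succ d ih =>
      intro hm
      have h1 := ih (by omega)
      have h2 := hc (a + d) (by omega) (by omega)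
      calc g a ≤ g (a + d) := h1
        _ ≤ g (a + d + 1) := h2
  have h3 := key (b - a) (by omega)
  rw [show a + (b - a) = b by omega] at h3
  linarith

lemma swap_val (a b x : Fin n) (hab : (a : ℕ) + 1 = (b : ℕ)) :
    ((Equiv.swap a b x : Fin n) : ℕ) =
      if (x : ℕ) = (a : ℕ) then (b : ℕ) else if (x : ℕ) = (b : ℕ) then (a : ℕ) else (x : ℕ) := by
  rcases eq_or_ne x a with h | h
  · subst h
    rw [Equiv.swap_apply_left]
    simp
  · rcases eq_or_ne x b with h2 | h2
    · subst h2
      rw [Equiv.swap_apply_right]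
      have h3 : (x : ℕ) ≠ (a : ℕ) := fun hc => h (Fin.ext hc)
      simp [h3]
    · rw [Equiv.swap_apply_of_ne_of_ne h h2]
      have h3 : (x : ℕ) ≠ (a : ℕ) := fun hc => h (Fin.ext hc)
      have h4 : (x : ℕ) ≠ (b : ℕ) := fun hc => h2 (Fin.ext hc)
      simp [h3, h4]

lemma mem_dsc_swap {k : ℕ} (hk : k + 1 < n) (π : Equiv.Perm (Fin n)) (p : Fin n × Fin n) :
    p ∈ dsc n π (Equiv.swap ⟨k, Nat.lt_of_succ_lt hk⟩ ⟨k + 1, hk⟩ * π) ↔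
      p.1 < p.2 ∧ (((π p.1 : ℕ) = k ∧ (π p.2 : ℕ) = k + 1) ∨
        ((π p.1 : ℕ) = k + 1 ∧ (π p.2 : ℕ) = k)) := by
  rw [mem_dsc]
  apply and_congr_right
  intro hlt
  have hab : (π p.1 : ℕ) ≠ (π p.2 : ℕ) := fun hc => hlt.ne (π.injective (Fin.ext hc))
  have h1 := swap_val ⟨k, Nat.lt_of_succ_lt hk⟩ ⟨k + 1, hk⟩ (π p.1) rfl
  have h2 := swap_val ⟨k, Nat.lt_of_succ_lt hk⟩ ⟨k + 1, hk⟩ (π p.2) rfl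
  simp only [Equiv.Perm.mul_apply]
  rw [mul_neg_iff]
  simp only [Fin.val_mk] at h1 h2
  split_ifs at h1 h2 <;> omega

lemma step_lemma (π φ : Equiv.Perm (Fin n)) (h : (dsc n π φ).Nonempty) :
    ∃ ψ : Equiv.Perm (Fin n), (Gn n).Adj π ψ ∧ (dsc n ψ φ).card + 1 = (dsc n π φ).card := by
  classical
  set g : ℕ → ℤ := fun m => if hm : m < n then ((φ (π.symm ⟨m, hm⟩) : Fin n) : ℤ) else 0 with hg
  have hgval : ∀ x : Fin n, g (π x : ℕ) = ((φ x : ℕ) : ℤ) := by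
    intro x
    simp only [hg]
    rw [dif_pos (π x).isLt, Fin.eta, Equiv.symm_apply_apply]
  obtain ⟨p, hpmem⟩ := h
  rw [mem_dsc] at hpmem
  obtain ⟨hp12, hprod⟩ := hpmem
  have hπne : (π p.1 : ℕ) ≠ (π p.2 : ℕ) := fun hc => hp12.ne (π.injective (Fin.ext hc))
  obtain ⟨a, b, hab, hbn, hgba⟩ : ∃ a b : ℕ, a < b ∧ b < n ∧ g b < g a := by
    rcases lt_or_gt_of_ne hπne with hlt | hgt
    · refine ⟨(π p.1 : ℕ), (π p.2 : ℕ), hlt, (π p.2).isLt, ?_⟩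
      rw [hgval p.1, hgval p.2]
      have h1 : ((π p.1 : ℕ) : ℤ) < ((π p.2 : ℕ) : ℤ) := by exact_mod_cast hlt
      nlinarith [hprod]
    · refine ⟨(π p.2 : ℕ), (π p.1 : ℕ), hgt, (π p.1).isLt, ?_⟩
      rw [hgval p.1, hgval p.2]
      have h1 : ((π p.2 : ℕ) : ℤ) < ((π p.1 : ℕ) : ℤ) := by exact_mod_cast hgt
      nlinarith [hprod]
  obtain ⟨k, hak, hkb, hdesc⟩ := exists_descent g a b hab hgba
  have hk : k + 1 < n := lt_of_le_of_lt hkb hbn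
  have hφ : ((φ (π.symm ⟨k + 1, hk⟩) : ℕ) : ℤ) < ((φ (π.symm ⟨k, Nat.lt_of_succ_lt hk⟩) : ℕ) : ℤ) := by
    have h1 := hdesc
    simp only [hg] at h1
    rw [dif_pos hk, dif_pos (Nat.lt_of_succ_lt hk)] at h1
    exact h1
  have hij : π.symm ⟨k, Nat.lt_of_succ_lt hk⟩ ≠ π.symm ⟨k + 1, hk⟩ := by
    intro hc
    have h1 := π.symm.injective hc
    exact absurd (congrArg Fin.val h1) (by simp)
  have hkey : ∃ i j : Fin n, i < j ∧
      (((π i : ℕ) = k ∧ (π j : ℕ) = k + 1) ∨ ((π i : ℕ) = k + 1 ∧ (π j : ℕ) = k)) ∧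
      ((π j : ℤ) - (π i : ℤ)) * ((φ j : ℤ) - (φ i : ℤ)) < 0 := by
    rcases lt_or_gt_of_ne hij with hlt | hgt
    · refine ⟨_, _, hlt, Or.inl ⟨by simp, by simp⟩, ?_⟩
      rw [Equiv.apply_symm_apply, Equiv.apply_symm_apply]
      simp only [Fin.val_mk]
      push_cast
      nlinarith [hφ]
    · refine ⟨_, _, hgt, Or.inr ⟨by simp, by simp⟩, ?_⟩
      rw [Equiv.apply_symm_apply, Equiv.apply_symm_apply]
      simp only [Fin.val_mk]
      push_cast
      nlinarith [hφ]
  obtain ⟨i, j, hijlt, hval, hprod0⟩ := hkey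
  set ψ : Equiv.Perm (Fin n) := Equiv.swap ⟨k, Nat.lt_of_succ_lt hk⟩ ⟨k + 1, hk⟩ * π with hψ
  have hsingle : dsc n π ψ = {(i, j)} := by
    ext q
    rw [Finset.mem_singleton, hψ, mem_dsc_swap hk]
    constructor
    · rintro ⟨hqlt, hqval⟩
      have e1 : ∀ x y : Fin n, (π x : ℕ) = (π y : ℕ) → x = y :=
        fun x y hxy => π.injective (Fin.ext hxy)
      rcases hqval with ⟨h1, h2⟩ | ⟨h1, h2⟩ <;> rcases hval with ⟨h3, h4⟩ | ⟨h3, h4⟩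
      · exact Prod.ext (e1 _ _ (h1.trans h3.symm)) (e1 _ _ (h2.trans h4.symm))
      · have e2 := e1 q.1 j (h1.trans h4.symm)
        have e3 := e1 q.2 i (h2.trans h3.symm)
        rw [e2, e3] at hqlt
        exact absurd hqlt (not_lt.mpr hijlt.le)
      · have e2 := e1 q.1 j (h1.trans h4.symm)
        have e3 := e1 q.2 i (h2.trans h3.symm)
        rw [e2, e3] at hqlt
        exact absurd hqlt (not_lt.mpr hijlt.le)
      · exact Prod.ext (e1 _ _ (h1.trans h3.symm)) (e1 _ _ (h2.trans h4.symm))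
    · rintro rfl
      exact ⟨hijlt, hval⟩
  have hadj : (Gn n).Adj π ψ := by
    show (dsc n π ψ).card = 1
    rw [hsingle]
    simp
  have hp0mem : (i, j) ∈ dsc n π φ := mem_dsc.mpr ⟨hijlt, hprod0⟩
  have hrest : dsc n ψ φ = (dsc n π φ).erase (i, j) := by
    ext q
    by_cases hqp : q.1 < q.2
    · rw [Finset.mem_erase]
      have hx := dsc_mem_iff ψ π φ hqp
      rw [dsc_comm n ψ π, hsingle, Finset.mem_singleton] at hx
      rw [hx]
      by_cases hqe : q = (i, j)
      · subst hqe
        simp [hp0mem]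
      · simp [hqe]
    · have h2 : ∀ π' φ' : Equiv.Perm (Fin n), q ∉ dsc n π' φ' := by
        intro π' φ' hmem
        exact hqp (mem_dsc.mp hmem).1
      simp [h2, Finset.mem_erase]
  refine ⟨ψ, hadj, ?_⟩
  rw [hrest, Finset.card_erase_of_mem hp0mem]
  have hpos := Finset.card_pos.mpr ⟨(i, j), hp0mem⟩
  omega

lemma exists_walk_dsc (π φ : Equiv.Perm (Fin n)) :
    ∃ w : (Gn n).Walk π φ, w.length = (dsc n π φ).card := by
  generalize hm : (dsc n π φ).card = m
  induction m generalizing π with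
  | zero =>
    have hπφ : π = φ := eq_of_dsc_empty (Finset.card_eq_zero.mp hm)
    subst hπφ
    exact ⟨SimpleGraph.Walk.nil, rfl⟩
  | succ m ih =>
    have hne : (dsc n π φ).Nonempty := Finset.card_pos.mp (by omega)
    obtain ⟨ψ, hadj, hcard⟩ := step_lemma π φ hne
    obtain ⟨w, hw⟩ := ih ψ (by omega)
    exact ⟨SimpleGraph.Walk.cons hadj w, by simp [SimpleGraph.Walk.length_cons, hw]⟩

lemma card_le_walk {π φ : Equiv.Perm (Fin n)} (w : (Gn n).Walk π φ) :
    (dsc n π φ).card ≤ w.length := by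
  induction w with
  | nil => simp [dsc_self]
  | @cons u v x hadj w ih =>
    have htri := dsc_card_add (n := n) u v x
    have h1 : (dsc n u v).card = 1 := hadj
    rw [SimpleGraph.Walk.length_cons]
    omega

lemma dist_eq_card (π φ : Equiv.Perm (Fin n)) :
    (Gn n).dist π φ = (dsc n π φ).card := by
  obtain ⟨w, hw⟩ := exists_walk_dsc π φ
  have hub := SimpleGraph.dist_le w
  have hreach : (Gn n).Reachable π φ := ⟨w⟩
  obtain ⟨w', hw'⟩ := hreach.exists_walk_length_eq_dist
  have hlb := card_le_walk w'
  omega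

end Aux

/-- Let `π ≠ φ` be vertices of `G_n`, `n ≥ 2`, and let `ψ ∈ S_n`. Then
`dsc(π,ψ) ∩ dsc(ψ,φ) = ∅` iff `ψ` lies on some shortest path between `π`
and `φ` in `G_n`, i.e. iff `d_{G_n}(π,ψ) + d_{G_n}(ψ,φ) = d_{G_n}(π,φ)`. -/
theorem dsc_inter_empty_iff_between (n : ℕ) (hn : 2 ≤ n)
    (π φ ψ : Equiv.Perm (Fin n)) (hne : π ≠ φ) :
    dsc n π ψ ∩ dsc n ψ φ = ∅ ↔
      (Gn n).dist π ψ + (Gn n).dist ψ φ = (Gn n).dist π φ := by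
  rw [dist_eq_card, dist_eq_card, dist_eq_card]
  have h := dsc_card_add π ψ φ
  constructor
  · intro h0
    rw [h0, Finset.card_empty] at h
    omega
  · intro h0
    have h1 : (dsc n π ψ ∩ dsc n ψ φ).card = 0 := by omega
    exact Finset.card_eq_zero.mp h1
end

section
/- Let n ≥ 3, let W be a weight with w_{i,j} > 0 for all 1 ≤ i < j ≤ n, and let C be a simple cycle of even length 2m in G_n, given by distinct vertices v_0, v_1, …, v_{2m−1} with v_k adjacent to v_{k+1} (indices mod 2m), which has a symmetric labeling, i.e., the unique element of dsc(v_k, v_{k+1}) equals the unique element of dsc(v_{k+m}, v_{k+m+1}) for every k. Suppose that for every index pair (i,j) occurring as a label of some edge of C, the number of edges of C labeled (i,j) equals 2(2k−1) for some positive integer k (depending on the label). Then for every two distinct, non-opposite vertices π = v_a and φ = v_b of C (i.e., a ≠ b and b ≠ a + m mod 2m), the four points π, φ and their opposite vertices π̄ = v_{a+m}, φ̄ = v_{b+m} form a pseudolinear quadruple in (S_n, d_W), with d_W(π,φ) = d_W(π̄,φ̄) = s, d_W(φ,π̄) = d_W(π,φ̄) = t, and d_W(π,π̄) = d_W(φ,φ̄)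 = s + t for some positive reals s, t. -/
open Finset
set_option maxHeartbeats 1000000

lemma mem_pairs {n : ℕ} {p : Fin n × Fin n} : p ∈ pairs n ↔ p.1 < p.2 := by
  simp [pairs]

lemma int_sign_mul_neg {A B : ℤ} (hA : A ≠ 0) (hB : B ≠ 0) :
    A * B < 0 ↔ ¬(0 < A ↔ 0 < B) := by
  rcases hA.lt_or_gt with h | h <;> rcases hB.lt_or_gt with h' | h'
  · simp [asymm (mul_pos_of_neg_of_neg h h'), asymm h, asymm h']
  · simp [mul_neg_of_neg_of_pos h h', asymm h, h']
  · simp [mul_neg_of_pos_of_neg h h', h, asymm h']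
  · simp [asymm (mul_pos h h'), h, h']

lemma mem_dsc_iff {n : ℕ} (π φ : Equiv.Perm (Fin n)) {p : Fin n × Fin n}
    (hp : p ∈ pairs n) :
    p ∈ dsc n π φ ↔ ¬((π p.1 < π p.2) ↔ (φ p.1 < φ p.2)) := by
  have h1 : (π p.1).val ≠ (π p.2).val :=
    fun h => (mem_pairs.1 hp).ne (π.injective (Fin.val_injective h))
  have h2 : (φ p.1).val ≠ (φ p.2).val :=
    fun h => (mem_pairs.1 hp).ne (φ.injective (Fin.val_injective h))
  have hA : ((π p.2 : ℤ) - (π p.1 : ℤ)) ≠ 0 := sub_ne_zero.2 (by exact_mod_cast h1.symm)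
  have hB : ((φ p.2 : ℤ) - (φ p.1 : ℤ)) ≠ 0 := sub_ne_zero.2 (by exact_mod_cast h2.symm)
  rw [dsc, Finset.mem_filter]
  simp only [hp, true_and]
  rw [int_sign_mul_neg hA hB, sub_pos, sub_pos, Fin.lt_def, Fin.lt_def]
  constructor <;> intro h h' <;> apply h
  · exact ⟨fun ha => by exact_mod_cast h'.1 (by exact_mod_cast ha),
      fun ha => by exact_mod_cast h'.2 (by exact_mod_cast ha)⟩
  · exact ⟨fun ha => by exact_mod_cast h'.1 (by exact_mod_cast ha),
      fun ha => by exact_mod_cast h'.2 (by exact_mod_cast ha)⟩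

lemma dsc_nonempty_of_ne {n : ℕ} {π φ : Equiv.Perm (Fin n)} (h : π ≠ φ) :
    (dsc n π φ).Nonempty := by
  rw [Finset.nonempty_iff_ne_empty]
  intro he
  apply h
  have key : ∀ i j : Fin n, i < j → (π i < π j ↔ φ i < φ j) := by
    intro i j hij
    have hp : (i, j) ∈ pairs n := mem_pairs.2 hij
    have hnot : (i, j) ∉ dsc n π φ := by simp [he]
    rw [mem_dsc_iff π φ hp] at hnot
    tauto
  set f : Fin n → Fin n := fun x => φ (π.symm x) with hf
  have hmono : StrictMono f := by
    intro x y hxy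
    rcases lt_trichotomy (π.symm x) (π.symm y) with h' | h' | h'
    · have := (key _ _ h').1 (by simpa using hxy)
      simpa [hf] using this
    · exact absurd (congrArg π h') (by simpa using hxy.ne)
    · have h2 := key _ _ h'
      have hx : ¬ π (π.symm y) < π (π.symm x) := by simpa using asymm hxy
      have hne : f x ≠ f y := fun hc => hxy.ne (by
        have := π.symm.injective (φ.injective hc)
        simpa using congrArg π this)
      rcases hne.lt_or_gt with h3 | h3
      · exact h3
      · exact absurd (h2.2 h3) hx
  have hrange : Set.range f = Set.range (id : Fin n → Fin n) := by
    ext x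
    simp only [hf, Set.mem_range, Set.range_id, Set.mem_univ, iff_true]
    exact ⟨π (φ.symm x), by simp⟩
  haveI : WellFoundedLT (Fin n) := Finite.to_wellFoundedLT
  have hid : f = id := hmono.range_inj strictMono_id |>.1 hrange
  ext x : 1
  have := congrFun hid (π x)
  simpa [hf] using this.symm

/-- The cycle extended periodically to all of `ℕ`. -/
def wv {n : ℕ} (m : ℕ) (v : ℕ → Equiv.Perm (Fin n)) (k : ℕ) : Equiv.Perm (Fin n) :=
  v (k % (2 * m))

/-- The label set of the `k`-th edge of the (periodically extended) cycle. -/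
def Ek (n m : ℕ) (v : ℕ → Equiv.Perm (Fin n)) (k : ℕ) : Finset (Fin n × Fin n) :=
  dsc n (wv m v k) (wv m v (k + 1))

/-- Number of edges among steps `k, …, l-1` whose label set contains `p`. -/
def cnt (n m : ℕ) (v : ℕ → Equiv.Perm (Fin n)) (p : Fin n × Fin n) (k l : ℕ) : ℕ :=
  ∑ j ∈ Finset.Ico k l, if p ∈ Ek n m v j then 1 else 0

lemma dsc_subset_pairs {n : ℕ} (π φ : Equiv.Perm (Fin n)) : dsc n π φ ⊆ pairs n :=
  Finset.filter_subset _ _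

lemma iff_flip_aux {A B C : Prop} (h : ¬(B ↔ C)) : (A ↔ C) ↔ ¬(A ↔ B) := by tauto

lemma parity_mem (n m : ℕ) (v : ℕ → Equiv.Perm (Fin n)) {p : Fin n × Fin n}
    (hp : p ∈ pairs n) {k l : ℕ} (hkl : k ≤ l) :
    p ∈ dsc n (wv m v k) (wv m v l) ↔ cnt n m v p k l % 2 = 1 := by
  have main : ∀ l, k ≤ l →
      (((wv m v k) p.1 < (wv m v k) p.2 ↔ (wv m v l) p.1 < (wv m v l) p.2) ↔
        cnt n m v p k l % 2 = 0) := by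
    intro l hl
    induction l, hl using Nat.le_induction with
    | base => simp [cnt]
    | succ l hl ih =>
      have hc : cnt n m v p k (l + 1) =
          cnt n m v p k l + (if p ∈ Ek n m v l then 1 else 0) :=
        Finset.sum_Ico_succ_top hl _
      have hE : p ∈ Ek n m v l ↔
          ¬((wv m v l p.1 < wv m v l p.2) ↔ (wv m v (l+1) p.1 < wv m v (l+1) p.2)) :=
        mem_dsc_iff _ _ hp
      by_cases hl' : p ∈ Ek n m v l
      · have h1 := hE.1 hl'
        rw [if_pos hl'] at hc
        have h2 : cnt n m v p k (l+1) % 2 = 0 ↔ ¬(cnt n m v p k l % 2 = 0) := by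
          rw [hc]; omega
        rw [h2, ← ih]
        exact iff_flip_aux h1
      · have h1 : (wv m v l p.1 < wv m v l p.2) ↔ (wv m v (l+1) p.1 < wv m v (l+1) p.2) :=
          not_not.1 (fun hc' => hl' (hE.2 hc'))
        rw [if_neg hl', add_zero] at hc
        rw [hc, ← ih]
        exact iff_congr Iff.rfl h1.symm
  rw [mem_dsc_iff _ _ hp]
  have h2 : cnt n m v p k l % 2 = 1 ↔ ¬(cnt n m v p k l % 2 = 0) := by omega
  rw [h2]
  exact not_congr (main l hkl)

lemma wv_period {n : ℕ} (m : ℕ) (v : ℕ → Equiv.Perm (Fin n)) (k : ℕ) :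
    wv m v (k + 2 * m) = wv m v k := by
  unfold wv; rw [Nat.add_mod_right]

lemma Ek_mod {n : ℕ} {m : ℕ} (hm : 2 ≤ m) (v : ℕ → Equiv.Perm (Fin n)) (k : ℕ) :
    Ek n m v k = Ek n m v (k % (2 * m)) := by
  unfold Ek wv
  congr 2
  · simp
  · conv_lhs => rw [Nat.add_mod, Nat.mod_eq_of_lt (by omega : 1 < 2 * m)]

lemma Ek_lt {n : ℕ} {m : ℕ} (hm : 2 ≤ m) (v : ℕ → Equiv.Perm (Fin n)) {k : ℕ}
    (hk : k < 2 * m) :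
    Ek n m v k = dsc n (v k) (v ((k + 1) % (2 * m))) := by
  unfold Ek wv
  rw [Nat.mod_eq_of_lt hk]

lemma Ek_shift {n : ℕ} {m : ℕ} (hm : 2 ≤ m) (v : ℕ → Equiv.Perm (Fin n))
    (hsym : ∀ k < 2 * m,
      dsc n (v k) (v ((k + 1) % (2 * m))) =
        dsc n (v ((k + m) % (2 * m))) (v ((k + m + 1) % (2 * m)))) (k : ℕ) :
    Ek n m v (k + m) = Ek n m v k := by
  set r := k % (2 * m) with hr
  have hrlt : r < 2 * m := Nat.mod_lt _ (by omega)
  have h1 : Ek n m v k = dsc n (v r) (v ((r + 1) % (2 * m))) := by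
    rw [Ek_mod hm v k, Ek_lt hm v hrlt]
  have h2 : Ek n m v (k + m) = Ek n m v ((r + m) % (2 * m)) := by
    rw [Ek_mod hm v (k + m)]
    congr 1
    conv_lhs => rw [Nat.add_mod, Nat.mod_eq_of_lt (by omega : m < 2 * m)]
  have h3 : Ek n m v ((r + m) % (2 * m)) =
      dsc n (v ((r + m) % (2 * m))) (v ((r + m + 1) % (2 * m))) := by
    rw [Ek_lt hm v (Nat.mod_lt _ (by omega : 0 < 2 * m))]
    congr 2
    conv_rhs => rw [Nat.add_mod, Nat.mod_eq_of_lt (by omega : 1 < 2 * m)]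
  rw [h2, h3, ← hsym r hrlt, h1]

lemma cnt_shift {n : ℕ} {m : ℕ} (hm : 2 ≤ m) (v : ℕ → Equiv.Perm (Fin n))
    (hsym : ∀ k < 2 * m,
      dsc n (v k) (v ((k + 1) % (2 * m))) =
        dsc n (v ((k + m) % (2 * m))) (v ((k + m + 1) % (2 * m))))
    (p : Fin n × Fin n) (k l : ℕ) :
    cnt n m v p (k + m) (l + m) = cnt n m v p k l := by
  unfold cnt
  rw [Finset.sum_Ico_eq_sum_range, Finset.sum_Ico_eq_sum_range]
  rw [show l + m - (k + m) = l - k by omega]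
  refine Finset.sum_congr rfl (fun i _ => ?_)
  rw [show k + m + i = (k + i) + m by omega, Ek_shift hm v hsym]

lemma cnt_period {n : ℕ} {m : ℕ} (hm : 2 ≤ m) (v : ℕ → Equiv.Perm (Fin n))
    (p : Fin n × Fin n) (k : ℕ) :
    cnt n m v p k (k + 2 * m) = cnt n m v p 0 (2 * m) := by
  induction k with
  | zero => rw [Nat.zero_add]
  | succ k ih =>
    have e1 : cnt n m v p (k + 1) (k + 1 + 2 * m) =
        cnt n m v p (k + 1) (k + 2 * m) + (if p ∈ Ek n m v (k + 2 * m) then 1 else 0) := by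
      rw [show k + 1 + 2 * m = (k + 2 * m) + 1 by omega]
      exact Finset.sum_Ico_succ_top (by omega) _
    have e2 : cnt n m v p k (k + 2 * m) =
        (if p ∈ Ek n m v k then 1 else 0) + cnt n m v p (k + 1) (k + 2 * m) :=
      Finset.sum_eq_sum_Ico_succ_bot (by omega) _
    have e3 : Ek n m v (k + 2 * m) = Ek n m v k := by
      rw [Ek_mod hm v (k + 2 * m), Ek_mod hm v k, Nat.add_mod_right]
    rw [e1, e3, ← ih, e2]
    omega

lemma cnt_add {n : ℕ} (m : ℕ) (v : ℕ → Equiv.Perm (Fin n)) (p : Fin n × Fin n)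
    {k l j : ℕ} (hkl : k ≤ l) (hlj : l ≤ j) :
    cnt n m v p k l + cnt n m v p l j = cnt n m v p k j :=
  Finset.sum_Ico_consecutive _ hkl hlj

lemma occurs_of_cnt_ne_zero {n : ℕ} {m : ℕ} (hm : 2 ≤ m) (v : ℕ → Equiv.Perm (Fin n))
    {p : Fin n × Fin n} {k l : ℕ} (h : cnt n m v p k l ≠ 0) :
    ∃ j ∈ Finset.range (2 * m), p ∈ Ek n m v j := by
  by_contra hc
  push_neg at hc
  apply h
  refine Finset.sum_eq_zero (fun j _ => ?_)
  rw [if_neg]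
  intro hj
  exact hc (j % (2 * m)) (Finset.mem_range.2 (Nat.mod_lt _ (by omega)))
    (by rwa [← Ek_mod hm v j])

lemma cnt_total {n : ℕ} {m : ℕ} (hm : 2 ≤ m) (v : ℕ → Equiv.Perm (Fin n))
    (p : Fin n × Fin n) :
    cnt n m v p 0 (2 * m) =
      ((Finset.range (2 * m)).filter
        (fun k => p ∈ dsc n (v k) (v ((k + 1) % (2 * m))))).card := by
  unfold cnt
  rw [← Finset.range_eq_Ico]
  have h1 : (Finset.range (2 * m)).filter
        (fun k => p ∈ dsc n (v k) (v ((k + 1) % (2 * m)))) =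
      (Finset.range (2 * m)).filter (fun j => p ∈ Ek n m v j) := by
    refine Finset.filter_congr (fun j hj => ?_)
    rw [Ek_lt hm v (Finset.mem_range.1 hj)]
  rw [h1]
  have := Finset.sum_boole (fun j => p ∈ Ek n m v j) (Finset.range (2 * m)) (R := ℕ)
  simpa using this

/-- The set of all labels occurring on the cycle. -/
def Lf (n m : ℕ) (v : ℕ → Equiv.Perm (Fin n)) : Finset (Fin n × Fin n) :=
  (Finset.range (2 * m)).biUnion (fun j => Ek n m v j)

lemma mem_Lf {n m : ℕ} {v : ℕ → Equiv.Perm (Fin n)} {p : Fin n × Fin n} :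
    p ∈ Lf n m v ↔ ∃ j ∈ Finset.range (2 * m), p ∈ Ek n m v j :=
  Finset.mem_biUnion

lemma dsc_shift {n : ℕ} {m : ℕ} (hm : 2 ≤ m) (v : ℕ → Equiv.Perm (Fin n))
    (hsym : ∀ k < 2 * m,
      dsc n (v k) (v ((k + 1) % (2 * m))) =
        dsc n (v ((k + m) % (2 * m))) (v ((k + m + 1) % (2 * m))))
    {k l : ℕ} (hkl : k ≤ l) :
    dsc n (wv m v (k + m)) (wv m v (l + m)) = dsc n (wv m v k) (wv m v l) := by
  ext p
  by_cases hp : p ∈ pairs n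
  · rw [parity_mem n m v hp (by omega : k + m ≤ l + m), parity_mem n m v hp hkl,
      cnt_shift hm v hsym]
  · exact iff_of_false (fun h => hp (dsc_subset_pairs _ _ h))
      (fun h => hp (dsc_subset_pairs _ _ h))

lemma dsc_half {n : ℕ} {m : ℕ} (hm : 2 ≤ m) (v : ℕ → Equiv.Perm (Fin n))
    (hsym : ∀ k < 2 * m,
      dsc n (v k) (v ((k + 1) % (2 * m))) =
        dsc n (v ((k + m) % (2 * m))) (v ((k + m + 1) % (2 * m))))
    (hcount : ∀ p : Fin n × Fin n,
      (∃ k < 2 * m, p ∈ dsc n (v k) (v ((k + 1) % (2 * m)))) →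
      ∃ r : ℕ, 0 < r ∧
        ((Finset.range (2 * m)).filter
          (fun k => p ∈ dsc n (v k) (v ((k + 1) % (2 * m))))).card = 2 * (2 * r - 1))
    (k : ℕ) :
    dsc n (wv m v k) (wv m v (k + m)) = Lf n m v := by
  ext p
  by_cases hp : p ∈ pairs n
  · rw [parity_mem n m v hp (by omega : k ≤ k + m), mem_Lf]
    constructor
    · intro h
      refine occurs_of_cnt_ne_zero hm v (k := k) (l := k + m) (fun h0 => ?_)
      rw [h0] at h
      simp at h
    · rintro ⟨j, hj, hmem⟩
      obtain ⟨r, hr0, hcard⟩ := hcount p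
        ⟨j, Finset.mem_range.1 hj, by rwa [← Ek_lt hm v (Finset.mem_range.1 hj)]⟩
      have htot : cnt n m v p 0 (2 * m) = 2 * (2 * r - 1) := by
        rw [cnt_total hm v p]; exact hcard
      have h2 : cnt n m v p k (k + m) + cnt n m v p (k + m) (k + 2 * m)
          = cnt n m v p k (k + 2 * m) :=
        cnt_add m v p (by omega) (by omega)
      have h3 : cnt n m v p (k + m) (k + 2 * m) = cnt n m v p k (k + m) := by
        have := cnt_shift hm v hsym p k (k + m)
        rwa [show k + m + m = k + 2 * m by omega] at this
      have h4 : cnt n m v p k (k + 2 * m) = 2 * (2 * r - 1) := by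
        rw [cnt_period hm v p k]; exact htot
      omega
  · exact iff_of_false (fun h => hp (dsc_subset_pairs _ _ h))
      (fun h => by
        obtain ⟨j, _, hj⟩ := mem_Lf.1 h
        exact hp (dsc_subset_pairs _ _ hj))


lemma dW_comm (n : ℕ) (W : Fin n → Fin n → ℝ) (π φ : Equiv.Perm (Fin n)) :
    dW n W π φ = dW n W φ π := by
  unfold dW
  rw [dsc_comm]

lemma core_lemma (n m : ℕ) (hm : 2 ≤ m) (W : Fin n → Fin n → ℝ) (hW : IsWeight n W)
    (hpos : ∀ i j : Fin n, i < j → 0 < W i j)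
    (v : ℕ → Equiv.Perm (Fin n))
    (hsym : ∀ k < 2 * m,
      dsc n (v k) (v ((k + 1) % (2 * m))) =
        dsc n (v ((k + m) % (2 * m))) (v ((k + m + 1) % (2 * m))))
    (hcount : ∀ p : Fin n × Fin n,
      (∃ k < 2 * m, p ∈ dsc n (v k) (v ((k + 1) % (2 * m)))) →
      ∃ r : ℕ, 0 < r ∧
        ((Finset.range (2 * m)).filter
          (fun k => p ∈ dsc n (v k) (v ((k + 1) % (2 * m))))).card = 2 * (2 * r - 1))
    (x y : ℕ) (hxy : x < y) (hyxm : y < x + m)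
    (hne1 : wv m v x ≠ wv m v y) (hne2 : wv m v y ≠ wv m v (x + m)) :
    ∃ s t : ℝ, 0 < s ∧ 0 < t ∧
      dW n W (wv m v x) (wv m v y) = s ∧
      dW n W (wv m v (x + m)) (wv m v (y + m)) = s ∧
      dW n W (wv m v y) (wv m v (x + m)) = t ∧
      dW n W (wv m v x) (wv m v (y + m)) = t ∧
      dW n W (wv m v x) (wv m v (x + m)) = s + t ∧
      dW n W (wv m v y) (wv m v (y + m)) = s + t := by
  have hTot : 0 < ∑ p ∈ pairs n, W p.1 p.2 := hW.2.2
  have hSL : dsc n (wv m v x) (wv m v y) ⊆ Lf n m v := by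
    intro p hpS
    have hp : p ∈ pairs n := dsc_subset_pairs _ _ hpS
    have h1 := (parity_mem n m v hp hxy.le).1 hpS
    refine mem_Lf.2 (occurs_of_cnt_ne_zero hm v (k := x) (l := y) (fun h0 => ?_))
    rw [h0] at h1
    simp at h1
  have hTL : dsc n (wv m v y) (wv m v (x + m)) ⊆ Lf n m v := by
    intro p hpT
    have hp : p ∈ pairs n := dsc_subset_pairs _ _ hpT
    have h1 := (parity_mem n m v hp (by omega : y ≤ x + m)).1 hpT
    refine mem_Lf.2 (occurs_of_cnt_ne_zero hm v (k := y) (l := x + m) (fun h0 => ?_))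
    rw [h0] at h1
    simp at h1
  have hdisj : Disjoint (dsc n (wv m v x) (wv m v y)) (dsc n (wv m v y) (wv m v (x + m))) := by
    rw [Finset.disjoint_left]
    intro p hpS hpT
    have hp : p ∈ pairs n := dsc_subset_pairs _ _ hpS
    have h1 := (parity_mem n m v hp hxy.le).1 hpS
    have h2 := (parity_mem n m v hp (by omega : y ≤ x + m)).1 hpT
    have h4 : p ∈ dsc n (wv m v x) (wv m v (x + m)) := by
      rw [dsc_half hm v hsym hcount x]
      exact hSL hpS
    have h5 := (parity_mem n m v hp (by omega : x ≤ x + m)).1 h4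
    have hadd := cnt_add m v p hxy.le (by omega : y ≤ x + m)
    omega
  have hunion : dsc n (wv m v x) (wv m v y) ∪ dsc n (wv m v y) (wv m v (x + m))
      = Lf n m v := by
    apply Finset.Subset.antisymm (Finset.union_subset hSL hTL)
    intro p hpL
    have hp : p ∈ pairs n := by
      obtain ⟨j, _, hj⟩ := mem_Lf.1 hpL
      exact dsc_subset_pairs _ _ hj
    have h4 : p ∈ dsc n (wv m v x) (wv m v (x + m)) := by
      rw [dsc_half hm v hsym hcount x]
      exact hpL
    have h5 := (parity_mem n m v hp (by omega : x ≤ x + m)).1 h4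
    have hadd := cnt_add m v p hxy.le (by omega : y ≤ x + m)
    rw [Finset.mem_union, parity_mem n m v hp hxy.le,
      parity_mem n m v hp (by omega : y ≤ x + m)]
    omega
  have hSpos : 0 < ∑ p ∈ dsc n (wv m v x) (wv m v y), W p.1 p.2 :=
    Finset.sum_pos (fun p hp => hpos _ _ (mem_pairs.1 (dsc_subset_pairs _ _ hp)))
      (dsc_nonempty_of_ne hne1)
  have hTpos : 0 < ∑ p ∈ dsc n (wv m v y) (wv m v (x + m)), W p.1 p.2 :=
    Finset.sum_pos (fun p hp => hpos _ _ (mem_pairs.1 (dsc_subset_pairs _ _ hp)))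
      (dsc_nonempty_of_ne hne2)
  refine ⟨(∑ p ∈ dsc n (wv m v x) (wv m v y), W p.1 p.2) / (∑ p ∈ pairs n, W p.1 p.2),
    (∑ p ∈ dsc n (wv m v y) (wv m v (x + m)), W p.1 p.2) / (∑ p ∈ pairs n, W p.1 p.2),
    div_pos hSpos hTot, div_pos hTpos hTot, rfl, ?_, rfl, ?_, ?_, ?_⟩
  · unfold dW
    rw [dsc_shift hm v hsym hxy.le]
  · have h6 : dsc n (wv m v x) (wv m v (y + m)) = dsc n (wv m v y) (wv m v (x + m)) := by
      rw [dsc_comm]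
      have h7 := dsc_shift hm v hsym (k := y) (l := x + m) (by omega : y ≤ x + m)
      rw [show x + m + m = x + 2 * m by omega, wv_period m v x] at h7
      exact h7
    unfold dW
    rw [h6]
  · unfold dW
    rw [dsc_half hm v hsym hcount x, ← hunion, Finset.sum_union hdisj, add_div]
  · unfold dW
    rw [dsc_half hm v hsym hcount y, ← hunion, Finset.sum_union hdisj, add_div]


/-- Let `n ≥ 3`, let `W` be a weight with positive entries above the diagonal,
and let `v 0, …, v (2m-1)` be a simple cycle of even length `2m` in `G_n`
(distinct vertices, consecutive ones adjacent, indices mod `2m`) with a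
symmetric labeling: the label (the unique discordant pair) of each edge equals
that of the opposite edge. Suppose every label occurring on the cycle labels
exactly `2(2k-1)` edges of the cycle for some positive integer `k`. Then for
any two distinct non-opposite vertices `π = v a`, `φ = v b` of the cycle, the
points `π, φ` and their opposites `π̄ = v (a+m)`, `φ̄ = v (b+m)` form a
pseudolinear quadruple in `(S_n, d_W)`. -/
theorem cycle_pseudolinear_quadruple (n m : ℕ) (hn : 3 ≤ n) (hm : 2 ≤ m)
    (W : Fin n → Fin n → ℝ) (hW : IsWeight n W)
    (hpos : ∀ i j : Fin n, i < j → 0 < W i j)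
    (v : ℕ → Equiv.Perm (Fin n))
    (hdistinct : ∀ k < 2 * m, ∀ l < 2 * m, v k = v l → k = l)
    (hadj : ∀ k < 2 * m, (Gn n).Adj (v k) (v ((k + 1) % (2 * m))))
    (hsym : ∀ k < 2 * m,
      dsc n (v k) (v ((k + 1) % (2 * m))) =
        dsc n (v ((k + m) % (2 * m))) (v ((k + m + 1) % (2 * m))))
    (hcount : ∀ p : Fin n × Fin n,
      (∃ k < 2 * m, p ∈ dsc n (v k) (v ((k + 1) % (2 * m)))) →
      ∃ r : ℕ, 0 < r ∧
        ((Finset.range (2 * m)).filter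
          (fun k => p ∈ dsc n (v k) (v ((k + 1) % (2 * m))))).card = 2 * (2 * r - 1))
    (a b : ℕ) (ha : a < 2 * m) (hb : b < 2 * m)
    (hab : a ≠ b) (hopp : b ≠ (a + m) % (2 * m)) :
    ∃ s t : ℝ, 0 < s ∧ 0 < t ∧
      dW n W (v a) (v b) = s ∧
      dW n W (v ((a + m) % (2 * m))) (v ((b + m) % (2 * m))) = s ∧
      dW n W (v b) (v ((a + m) % (2 * m))) = t ∧
      dW n W (v a) (v ((b + m) % (2 * m))) = t ∧
      dW n W (v a) (v ((a + m) % (2 * m))) = s + t ∧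
      dW n W (v b) (v ((b + m) % (2 * m))) = s + t := by
  have h2m : 0 < 2 * m := by omega
  have hmod2 : (a + m) % (2 * m) = (if a + m < 2 * m then a + m else a + m - 2 * m) := by
    split_ifs with hc
    · exact Nat.mod_eq_of_lt hc
    · rw [Nat.mod_eq_sub_mod (by omega), Nat.mod_eq_of_lt (by omega)]
  obtain ⟨y, hy1, hy2, hy3, hy4⟩ :
      ∃ y, a < y ∧ y < a + 2 * m ∧ y % (2 * m) = b ∧ y ≠ a + m := by
    rcases lt_or_gt_of_ne hab with h | h
    · exact ⟨b, h, by omega, Nat.mod_eq_of_lt hb, by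
        rw [hmod2] at hopp; split_ifs at hopp with hc <;> omega⟩
    · exact ⟨b + 2 * m, by omega, by omega,
        by rw [Nat.add_mod_right]; exact Nat.mod_eq_of_lt hb, by
        rw [hmod2] at hopp; split_ifs at hopp with hc <;> omega⟩
  have hva : v a = wv m v a := by unfold wv; rw [Nat.mod_eq_of_lt ha]
  have hvb : v b = wv m v y := by unfold wv; rw [hy3]
  have hvam : v ((a + m) % (2 * m)) = wv m v (a + m) := rfl
  have hbmym : (y + m) % (2 * m) = (b + m) % (2 * m) := by
    conv_lhs => rw [Nat.add_mod, hy3, Nat.mod_eq_of_lt (show m < 2 * m by omega)]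
  have hvbm : v ((b + m) % (2 * m)) = wv m v (y + m) := by unfold wv; rw [hbmym]
  rw [hva, hvb, hvam, hvbm]
  have hmodlt : ∀ c : ℕ, c % (2 * m) < 2 * m := fun c => Nat.mod_lt _ h2m
  have hne_ab : wv m v a ≠ wv m v y := by
    rw [← hva, ← hvb]
    exact fun h => hab (hdistinct a ha b hb h)
  have hne_bam : wv m v y ≠ wv m v (a + m) := by
    rw [← hvb, ← hvam]
    exact fun h => hopp (hdistinct b hb _ (hmodlt _) h)
  rcases lt_or_gt_of_ne hy4 with hcase | hcase
  · exact core_lemma n m hm W hW hpos v hsym hcount a y hy1 hcase hne_ab hne_bam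
  · -- y > a + m
    have hym : y - m + m = y := by omega
    have hper_a : wv m v (a + m + m) = wv m v a := by
      rw [show a + m + m = a + 2 * m by omega, wv_period]
    have hper_y : wv m v (y + m) = wv m v (y - m) := by
      rw [show y + m = (y - m) + 2 * m by omega, wv_period]
    have hne1' : wv m v (y - m) ≠ wv m v (a + m) := by
      rw [← hper_y, ← hvbm, ← hvam]
      intro h
      have hmm := hdistinct _ (hmodlt (b + m)) _ (hmodlt (a + m)) h
      have h3 : b % (2 * m) = a % (2 * m) := Nat.ModEq.add_right_cancel' m hmm
      rw [Nat.mod_eq_of_lt hb, Nat.mod_eq_of_lt ha] at h3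
      exact hab h3.symm
    have hne2' : wv m v (a + m) ≠ wv m v (y - m + m) := by
      rw [hym]; exact hne_bam.symm
    obtain ⟨s, t, hs, ht, e1, e2, e3, e4, e5, e6⟩ :=
      core_lemma n m hm W hW hpos v hsym hcount (y - m) (a + m)
        (by omega) (by omega) hne1' hne2'
    rw [hym] at e2 e3 e5
    refine ⟨s, t, hs, ht, ?_, ?_, ?_, ?_, ?_, ?_⟩
    · rw [hper_a] at e2
      rw [dW_comm]
      exact e2
    · rw [hper_y, dW_comm]
      exact e1
    · rw [dW_comm]
      exact e3
    · rw [hper_a] at e4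
      rw [hper_y, dW_comm]
      exact e4
    · have hh : dW n W (wv m v a) (wv m v (a + m))
          = dW n W (wv m v (a + m)) (wv m v (a + m + m)) := by
        unfold dW
        rw [dsc_half hm v hsym hcount a, dsc_half hm v hsym hcount (a + m)]
      rw [hh]
      exact e6
    · have hh : dW n W (wv m v y) (wv m v (y + m))
          = dW n W (wv m v (y - m)) (wv m v (y - m + m)) := by
        unfold dW
        rw [dsc_half hm v hsym hcount y, dsc_half hm v hsym hcount (y - m)]
      rw [hh, hym]
      exact e5
end

section
/- Let n ≥ 3 and let W be a weight with w_{i,j} > 0 for all 1 ≤ i < j ≤ n such that any two distinct subsets of index pairs have distinct weight sums, i.e., for all distinct sets S_1, S_2 of pairs (i,j) with i < j one has Σ_{(i,j)∈S_1} w_{i,j} ≠ Σ_{(i,j)∈S_2} w_{i,j}. Let π, φ, π̄, φ̄ ∈ S_n be pairwise distinct. Then the following are equivalent: (i) d_W(π,φ) = d_W(π̄,φ̄), d_W(φ,π̄) = d_W(φ̄,π), and d_W(π,π̄) = d_W(φ,φ̄) = d_W(π,φ) + d_W(φ,π̄) (i.e., {π,φ,π̄,φ̄} form a pseudolinear quadruple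 with diametrical pairs (π,π̄) and (φ,φ̄)); (ii) dsc(π,φ) = dsc(π̄,φ̄), dsc(φ,π̄) = dsc(φ̄,π), and dsc(π,φ) ∩ dsc(φ,π̄) = ∅. -/
open Finset
open scoped symmDiff

lemma dsc_subset (n : ℕ) (π φ : Equiv.Perm (Fin n)) : dsc n π φ ⊆ pairs n :=
  filter_subset _ _

lemma diff_ne (n : ℕ) (π : Equiv.Perm (Fin n)) {p : Fin n × Fin n} (hp : p ∈ pairs n) :
    ((π p.2 : ℤ) - (π p.1 : ℤ)) ≠ 0 := by
  have hlt : p.1 < p.2 := (mem_filter.mp hp).2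
  have hne : π p.1 ≠ π p.2 := fun h => absurd (π.injective h) (ne_of_lt hlt)
  intro h
  apply hne
  have : (π p.1 : ℤ) = (π p.2 : ℤ) := by linarith
  exact Fin.ext (by exact_mod_cast this)

lemma sign_xor {a b c : ℤ} (ha : a ≠ 0) (hb : b ≠ 0) (hc : c ≠ 0) :
    a * c < 0 ↔ ((a * b < 0 ∧ ¬ b * c < 0) ∨ (b * c < 0 ∧ ¬ a * b < 0)) := by
  rcases ha.lt_or_gt with h1 | h1 <;> rcases hb.lt_or_gt with h2 | h2 <;>
    rcases hc.lt_or_gt with h3 | h3 <;>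
  · constructor
    · intro h
      first
        | exact Or.inl ⟨by nlinarith, fun hx => by nlinarith⟩
        | exact Or.inr ⟨by nlinarith, fun hx => by nlinarith⟩
        | nlinarith
    · rintro (⟨h, h'⟩ | ⟨h, h'⟩) <;>
        first
          | nlinarith
          | exact absurd (by nlinarith) h'

lemma dsc_symmDiff (n : ℕ) (π φ ψ : Equiv.Perm (Fin n)) :
    dsc n π ψ = (dsc n π φ) ∆ (dsc n φ ψ) := by
  ext p
  by_cases hp : p ∈ pairs n
  · simp only [Finset.mem_symmDiff, dsc, mem_filter, hp, true_and, not_and, not_lt]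
    rw [sign_xor (diff_ne n π hp) (diff_ne n φ hp) (diff_ne n ψ hp)]
    simp only [not_lt]
  · simp [Finset.mem_symmDiff, dsc, mem_filter, hp]

lemma div_cancel_aux {x y D : ℝ} (hD : D ≠ 0) (h : x / D = y / D) : x = y := by
  field_simp at h; exact h

/-- Let `n ≥ 3` and let `W` be a weight with positive entries above the
diagonal such that any two distinct sets of index pairs have distinct weight
sums. Let `π, φ, π̄, φ̄ ∈ S_n` be pairwise distinct. Then
`{π, φ, π̄, φ̄}` forms a pseudolinear quadruple with diametrical pairs
`(π,π̄)`, `(φ,φ̄)` (condition (i)) iff `dsc(π,φ) = dsc(π̄,φ̄)`,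
`dsc(φ,π̄) = dsc(φ̄,π)` and `dsc(π,φ) ∩ dsc(φ,π̄) = ∅` (condition (ii)). -/
theorem pseudolinear_iff_dsc (n : ℕ) (hn : 3 ≤ n)
    (W : Fin n → Fin n → ℝ) (hW : IsWeight n W)
    (hpos : ∀ i j : Fin n, i < j → 0 < W i j)
    (hsums : ∀ S₁ S₂ : Finset (Fin n × Fin n),
      S₁ ⊆ pairs n → S₂ ⊆ pairs n → S₁ ≠ S₂ →
      (∑ p ∈ S₁, W p.1 p.2) ≠ ∑ p ∈ S₂, W p.1 p.2)
    (π φ π' φ' : Equiv.Perm (Fin n))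
    (h1 : π ≠ φ) (h2 : π ≠ π') (h3 : π ≠ φ')
    (h4 : φ ≠ π') (h5 : φ ≠ φ') (h6 : π' ≠ φ') :
    (dW n W π φ = dW n W π' φ' ∧ dW n W φ π' = dW n W φ' π ∧
      dW n W π π' = dW n W φ φ' ∧
      dW n W π π' = dW n W π φ + dW n W φ π') ↔
    (dsc n π φ = dsc n π' φ' ∧ dsc n φ π' = dsc n φ' π ∧
      dsc n π φ ∩ dsc n φ π' = ∅) := by
  set D : ℝ := ∑ p ∈ pairs n, W p.1 p.2 with hD
  have hD0 : D ≠ 0 := ne_of_gt hW.2.2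
  -- dW equality iff dsc equality
  have key : ∀ α β γ δ : Equiv.Perm (Fin n),
      dW n W α β = dW n W γ δ ↔ dsc n α β = dsc n γ δ := by
    intro α β γ δ
    constructor
    · intro h
      by_contra hne
      exact hsums _ _ (dsc_subset n α β) (dsc_subset n γ δ) hne
        (div_cancel_aux hD0 h)
    · intro h; unfold dW; rw [h]
  -- symmetric-difference identities
  have hsd : dsc n π π' = (dsc n π φ) ∆ (dsc n φ π') := dsc_symmDiff n π φ π'
  set A := dsc n π φ with hA
  set B := dsc n φ π' with hB
  constructor
  · rintro ⟨e1, e2, _, e4⟩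
    refine ⟨(key _ _ _ _).mp e1, (key _ _ _ _).mp e2, ?_⟩
    -- from the additivity, the intersection sum vanishes
    have hsum : ∑ p ∈ A ∆ B, W p.1 p.2 = ∑ p ∈ A, W p.1 p.2 + ∑ p ∈ B, W p.1 p.2 := by
      have := e4
      unfold dW at this
      rw [hsd, ← add_div] at this
      exact div_cancel_aux hD0 this
    have hsplit : ∑ p ∈ A ∆ B, W p.1 p.2
        = ∑ p ∈ A \ B, W p.1 p.2 + ∑ p ∈ B \ A, W p.1 p.2 := by
      rw [symmDiff_def, Finset.sup_eq_union]
      exact Finset.sum_union (disjoint_sdiff_sdiff)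
    have hA' : ∑ p ∈ A, W p.1 p.2 = ∑ p ∈ A ∩ B, W p.1 p.2 + ∑ p ∈ A \ B, W p.1 p.2 :=
      (Finset.sum_inter_add_sum_sdiff A B _).symm
    have hB' : ∑ p ∈ B, W p.1 p.2 = ∑ p ∈ B ∩ A, W p.1 p.2 + ∑ p ∈ B \ A, W p.1 p.2 :=
      (Finset.sum_inter_add_sum_sdiff B A _).symm
    have hBA : ∑ p ∈ B ∩ A, W p.1 p.2 = ∑ p ∈ A ∩ B, W p.1 p.2 := by
      rw [Finset.inter_comm]
    have hzero : ∑ p ∈ A ∩ B, W p.1 p.2 = 0 := by linarith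
    rw [Finset.eq_empty_iff_forall_notMem]
    intro p hp
    have hpp : p ∈ pairs n := dsc_subset n π φ (Finset.mem_of_mem_inter_left hp)
    have hwp : 0 < W p.1 p.2 := hpos _ _ (mem_filter.mp hpp).2
    have hle : W p.1 p.2 ≤ ∑ p ∈ A ∩ B, W p.1 p.2 :=
      Finset.single_le_sum (fun q _ => hW.2.1 q.1 q.2) hp
    linarith
  · rintro ⟨e1, e2, e3⟩
    have hdisj : Disjoint A B := Finset.disjoint_iff_inter_eq_empty.mpr e3
    have hsum : ∑ p ∈ A ∆ B, W p.1 p.2 = ∑ p ∈ A, W p.1 p.2 + ∑ p ∈ B, W p.1 p.2 := by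
      rw [hdisj.symmDiff_eq_sup]
      exact Finset.sum_union hdisj
    have hφφ' : dsc n φ φ' = dsc n π π' := by
      rw [dsc_symmDiff n φ π' φ', ← e1, hsd, ← hB, symmDiff_comm]
    refine ⟨(key _ _ _ _).mpr e1, (key _ _ _ _).mpr e2, ?_, ?_⟩
    · exact ((key _ _ _ _).mpr hφφ'.symm)
    · unfold dW
      rw [hsd, hsum, add_div]
end
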